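/- Let (M, N) define a singular equivalence of Morita type in the sense of Chen-Sun between finite-dimensional k-algebras A and B. If A is self-injective, then B is self-injective. -/

import Mathlib

set_option linter.unusedSectionVars false
set_option maxHeartbeats 1000000
set_option synthInstance.maxHeartbeats 400000

open MulOpposite
open scoped TensorProduct

universe u

noncomputable section

open scoped TensorProduct
open MulOpposite

namespace NC

noncomputable section

universe w v

variable (k : Type w) [CommRing k] (B : Type u) [Ring B]
variable (M N : Type v) [AddCommGroup M] [AddCommGroup N] [Module k M] [Module k N]
variable [Module Bᵐᵒᵖ M] [Module B N]

/-- The defining relations of the balanced tensor product `M ⊗_B N`. -/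
def rel : Submodule k (TensorProduct k M N) :=
  Submodule.span k
    {z | ∃ (b : B) (m : M) (n : N), z = (op b • m) ⊗ₜ[k] n - m ⊗ₜ[k] (b • n)}

/-- The balanced tensor product `M ⊗_B N` of a right `B`-module `M` and a left
`B`-module `N` over the noncommutative ring `B`, as a quotient of `M ⊗[k] N`. -/
def Tensor := TensorProduct k M N ⧸ rel k B M N

instance : AddCommGroup (Tensor k B M N) :=
  inferInstanceAs (AddCommGroup (TensorProduct k M N ⧸ rel k B M N))

instance : Module k (Tensor k B M N) :=
  inferInstanceAs (Module k (TensorProduct k M N ⧸ rel k B M N))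

variable {M N}

/-- The canonical image of `m ⊗ n` in `M ⊗_B N`. -/
def mk (m : M) (n : N) : Tensor k B M N :=
  Submodule.Quotient.mk (m ⊗ₜ[k] n)

lemma mk_balanced (b : B) (m : M) (n : N) : mk k B (op b • m) n = mk k B m (b • n) := by
  rw [mk, mk]
  erw [Submodule.Quotient.eq]
  exact Submodule.subset_span ⟨b, m, n, rfl⟩

lemma mk_add_left (m m' : M) (n : N) : mk k B (m + m') n = mk k B m n + mk k B m' n := by
  simp [mk, TensorProduct.add_tmul, Submodule.Quotient.mk_add]; rfl

lemma mk_add_right (m : M) (n n' : N) : mk k B m (n + n') = mk k B m n + mk k B m n' := by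
  simp [mk, TensorProduct.tmul_add, Submodule.Quotient.mk_add]; rfl

lemma smul_mk_k (c : k) (m : M) (n : N) : c • mk k B m n = mk k B (c • m) n := by
  rw [mk, mk]
  erw [← Submodule.Quotient.mk_smul]
  rw [TensorProduct.smul_tmul']

lemma smul_mk_k' (c : k) (m : M) (n : N) : c • mk k B m n = mk k B m (c • n) := by
  rw [mk, mk, TensorProduct.tmul_smul, Submodule.Quotient.mk_smul]; rfl

lemma mk_zero_left (n : N) : mk k B (0 : M) n = 0 := by
  simp [mk, TensorProduct.zero_tmul]; rfl

lemma mk_zero_right (m : M) : mk k B m (0 : N) = 0 := by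
  simp [mk, TensorProduct.tmul_zero]; rfl

lemma induction_on {p : Tensor k B M N → Prop} (t : Tensor k B M N)
    (zero : p 0) (basic : ∀ m n, p (mk k B m n))
    (add : ∀ x y, p x → p y → p (x + y)) : p t := by
  obtain ⟨x, rfl⟩ := Submodule.Quotient.mk_surjective _ t
  induction x using TensorProduct.induction_on with
  | zero => exact zero
  | tmul m n => exact basic m n
  | add x y hx hy => rw [Submodule.Quotient.mk_add]; exact add _ _ hx hy

section Lift

variable {P : Type v} [AddCommGroup P] [Module k P]

/-- Lift a balanced `k`-bilinear map to the balanced tensor product. -/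
def lift (f : M →ₗ[k] N →ₗ[k] P)
    (hf : ∀ (b : B) (m : M) (n : N), f (op b • m) n = f m (b • n)) :
    Tensor k B M N →ₗ[k] P :=
  Submodule.liftQ _ (TensorProduct.lift f) (by
    rw [rel, Submodule.span_le]
    rintro z ⟨b, m, n, rfl⟩
    simp [LinearMap.mem_ker, hf b m n])

@[simp] lemma lift_mk (f : M →ₗ[k] N →ₗ[k] P) (hf) (m : M) (n : N) :
    lift k B f hf (mk k B m n) = f m n := rfl

end Lift

section LeftAction

variable (A : Type u) [Ring A] [Module A M]
variable [SMulCommClass A Bᵐᵒᵖ M] [SMulCommClass A k M]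

/-- The `k`-linear endomorphism of `M` given by the action of `a : A`. -/
def actL (a : A) : M →ₗ[k] M where
  toFun m := a • m
  map_add' := smul_add a
  map_smul' c m := (smul_comm a c m)

variable (N)

lemma relLe (a : A) :
    rel k B M N ≤ Submodule.comap (LinearMap.rTensor N (actL k A a)) (rel k B M N) := by
  rw [rel, Submodule.span_le]
  rintro z ⟨b, m, n, rfl⟩
  simp only [SetLike.mem_coe, Submodule.mem_comap, map_sub, LinearMap.rTensor_tmul]
  refine Submodule.subset_span ⟨b, a • m, n, ?_⟩
  have h1 : actL k A a (op b • m) = op b • (a • m) := smul_comm a (op b) m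
  have h2 : actL k A a m = a • m := rfl
  rw [h1, h2]

/-- The action of `a : A` on `M ⊗_B N`. -/
def actLQ (a : A) : Tensor k B M N →ₗ[k] Tensor k B M N :=
  Submodule.mapQ _ _ (LinearMap.rTensor N (actL k A a)) (relLe k B N A a)

lemma actLQ_mk (a : A) (m : M) (n : N) :
    actLQ k B N A a (mk k B m n) = mk k B (a • m) n := rfl

/-- The ring homomorphism `A → End_k (M ⊗_B N)` defining the left `A`-module structure. -/
def actLRingHom : A →+* Module.End k (Tensor k B M N) where
  toFun := actLQ k B N A
  map_one' := by
    refine Submodule.linearMap_qext _ (TensorProduct.ext' fun m n => ?_)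
    show actLQ k B N A 1 (mk k B m n) = mk k B m n
    rw [actLQ_mk, one_smul]
  map_mul' x y := by
    refine Submodule.linearMap_qext _ (TensorProduct.ext' fun m n => ?_)
    show actLQ k B N A (x * y) (mk k B m n) = actLQ k B N A x (actLQ k B N A y (mk k B m n))
    rw [actLQ_mk, actLQ_mk, actLQ_mk, mul_smul]
  map_zero' := by
    refine Submodule.linearMap_qext _ (TensorProduct.ext' fun m n => ?_)
    show actLQ k B N A 0 (mk k B m n) = 0
    rw [actLQ_mk, zero_smul, mk_zero_left]
  map_add' x y := by
    refine Submodule.linearMap_qext _ (TensorProduct.ext' fun m n => ?_)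
    show actLQ k B N A (x + y) (mk k B m n)
        = actLQ k B N A x (mk k B m n) + actLQ k B N A y (mk k B m n)
    rw [actLQ_mk, actLQ_mk, actLQ_mk, add_smul, mk_add_left]

variable (M)

/-- The left `A`-module structure on `M ⊗_B N` induced by the left `A`-action on `M`. -/
def leftModule : Module A (Tensor k B M N) :=
  Module.compHom (Tensor k B M N) (actLRingHom k B N A (M := M))

attribute [local instance] leftModule

lemma smul_mk_left (a : A) (m : M) (n : N) :
    a • mk k B m n = mk k B (a • m) n := rfl

instance : SMulCommClass A k (Tensor k B M N) where
  smul_comm a c t := by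
    induction t using induction_on with
    | zero => simp
    | basic m n => rw [smul_mk_k, smul_mk_left, smul_mk_left, smul_mk_k, smul_comm]
    | add x y hx hy => simp [smul_add, hx, hy]

instance : SMulCommClass k A (Tensor k B M N) := SMulCommClass.symm _ _ _

end LeftAction

section RightAction

variable (C : Type u) [Ring C] [Module Cᵐᵒᵖ N]
variable [SMulCommClass Cᵐᵒᵖ B N] [SMulCommClass Cᵐᵒᵖ k N]

/-- The `k`-linear endomorphism of `N` given by the right action of `c : C`. -/
def actR (c : Cᵐᵒᵖ) : N →ₗ[k] N where
  toFun n := c • n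
  map_add' := smul_add c
  map_smul' d n := (smul_comm c d n)

variable (M)

lemma relLeR (c : Cᵐᵒᵖ) :
    rel k B M N ≤ Submodule.comap (LinearMap.lTensor M (actR k C c)) (rel k B M N) := by
  rw [rel, Submodule.span_le]
  rintro z ⟨b, m, n, rfl⟩
  simp only [SetLike.mem_coe, Submodule.mem_comap, map_sub, LinearMap.lTensor_tmul]
  refine Submodule.subset_span ⟨b, m, c • n, ?_⟩
  have h1 : actR k C c (b • n) = b • (c • n) := smul_comm c b n
  have h2 : actR k C c n = c • n := rfl
  rw [h1, h2]

/-- The right action of `c : C` on `M ⊗_B N`. -/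
def actRQ (c : Cᵐᵒᵖ) : Tensor k B M N →ₗ[k] Tensor k B M N :=
  Submodule.mapQ _ _ (LinearMap.lTensor M (actR k C c)) (relLeR k B M C c)

lemma actRQ_mk (c : Cᵐᵒᵖ) (m : M) (n : N) :
    actRQ k B M C c (mk k B m n) = mk k B m (c • n) := rfl

/-- The ring homomorphism `Cᵐᵒᵖ → End_k (M ⊗_B N)` defining the right `C`-module structure. -/
def actRRingHom : Cᵐᵒᵖ →+* Module.End k (Tensor k B M N) where
  toFun := actRQ k B M C
  map_one' := by
    refine Submodule.linearMap_qext _ (TensorProduct.ext' fun m n => ?_)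
    show actRQ k B M C 1 (mk k B m n) = mk k B m n
    rw [actRQ_mk, one_smul]
  map_mul' x y := by
    refine Submodule.linearMap_qext _ (TensorProduct.ext' fun m n => ?_)
    show actRQ k B M C (x * y) (mk k B m n) = actRQ k B M C x (actRQ k B M C y (mk k B m n))
    rw [actRQ_mk, actRQ_mk, actRQ_mk, mul_smul]
  map_zero' := by
    refine Submodule.linearMap_qext _ (TensorProduct.ext' fun m n => ?_)
    show actRQ k B M C 0 (mk k B m n) = 0
    rw [actRQ_mk, zero_smul, mk_zero_right]
  map_add' x y := by
    refine Submodule.linearMap_qext _ (TensorProduct.ext' fun m n => ?_)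
    show actRQ k B M C (x + y) (mk k B m n)
        = actRQ k B M C x (mk k B m n) + actRQ k B M C y (mk k B m n)
    rw [actRQ_mk, actRQ_mk, actRQ_mk, add_smul, mk_add_right]

/-- The right `C`-module structure on `M ⊗_B N` induced by the right `C`-action on `N`. -/
def rightModule : Module Cᵐᵒᵖ (Tensor k B M N) :=
  Module.compHom (Tensor k B M N) (actRRingHom k B M C (N := N))

attribute [local instance] rightModule

lemma smul_mk_right (c : Cᵐᵒᵖ) (m : M) (n : N) :
    c • mk k B m n = mk k B m (c • n) := rfl

instance : SMulCommClass Cᵐᵒᵖ k (Tensor k B M N) where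
  smul_comm c d t := by
    induction t using induction_on with
    | zero => simp
    | basic m n =>
        rw [smul_mk_k, smul_mk_right, smul_mk_right, smul_mk_k]
    | add x y hx hy => simp [smul_add, hx, hy]

instance : SMulCommClass k Cᵐᵒᵖ (Tensor k B M N) := SMulCommClass.symm _ _ _

end RightAction

section Bimodule

variable (A C : Type u) [Ring A] [Ring C] [Module A M] [Module Cᵐᵒᵖ N]
variable [SMulCommClass A Bᵐᵒᵖ M] [SMulCommClass A k M]
variable [SMulCommClass Cᵐᵒᵖ B N] [SMulCommClass Cᵐᵒᵖ k N]

attribute [local instance] leftModule rightModule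

instance : SMulCommClass A Cᵐᵒᵖ (Tensor k B M N) where
  smul_comm a c t := by
    induction t using induction_on with
    | zero => simp
    | basic m n =>
        simp only [smul_mk_right k B M C, smul_mk_left k B M N A]
    | add x y hx hy => simp [smul_add, hx, hy]

section Tower

variable [Algebra k A] [Module k M] [IsScalarTower k A M]

instance : IsScalarTower k A (Tensor k B M N) where
  smul_assoc c a t := by
    induction t using induction_on with
    | zero => simp
    | basic m n =>
        simp only [smul_mk_left k B M N A, smul_mk_k, smul_assoc]
    | add x y hx hy => simp [smul_add, hx, hy]

end Tower

section TowerR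

variable [Algebra k C] [IsScalarTower k Cᵐᵒᵖ N]

instance : IsScalarTower k Cᵐᵒᵖ (Tensor k B M N) where
  smul_assoc c a t := by
    induction t using induction_on with
    | zero => simp
    | basic m n =>
        simp only [smul_mk_right k B M C, smul_mk_k', smul_assoc]
    | add x y hx hy => simp [smul_add, hx, hy]

end TowerR

end Bimodule

end

end NC

/-- `X` has projective dimension at most `n` over `R`. -/
def pdLE (R : Type u) [Ring R] : ℕ → ModuleCat.{u} R → Prop
  | 0, X => Module.Projective R X
  | n+1, X => ∃ (P : ModuleCat.{u} R) (f : P →ₗ[R] X),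
      Module.Projective R P ∧ Function.Surjective f ∧ pdLE R n (ModuleCat.of R (LinearMap.ker f))

/-- `X` has finite projective dimension over `R`. -/
def FinPd (R : Type u) [Ring R] (X : Type u) [AddCommGroup X] [Module R X] : Prop :=
  ∃ n, pdLE R n (ModuleCat.of R X)

section Gen

variable {R : Type u} [Ring R]

theorem injective_of_retract {W E : Type u} [AddCommGroup W] [AddCommGroup E]
    [Module R W] [Module R E] (u : W →ₗ[R] E) (r : E →ₗ[R] W) (hr : ∀ w, r (u w) = w)
    (hE : Module.Injective R E) : Module.Injective R W where
  out X Y _ _ _ _ f hf g := by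
    obtain ⟨h, hh⟩ := hE.out f hf (u ∘ₗ g)
    exact ⟨r ∘ₗ h, fun x => by simp [hh x, hr]⟩

theorem injective_pi (n : ℕ) (hR : Module.Injective R R) :
    Module.Injective R (Fin n → R) where
  out X Y _ _ _ _ f hf g := by
    choose h hh using fun i => hR.out f hf ((LinearMap.proj i) ∘ₗ g)
    exact ⟨LinearMap.pi h, fun x => by ext i; simpa using hh i x⟩

theorem exists_gen_split {M : Type u} [AddCommGroup M] [Module R M]
    [Module.Finite R M] [Module.Projective R M] :
    ∃ (n : ℕ) (x : Fin n → M) (s : M →ₗ[R] (Fin n → R)),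
      ∀ m, ∑ i, s m i • x i = m := by
  obtain ⟨n, x, hx⟩ := Module.Finite.exists_fin (R := R) (M := M)
  let p : (Fin n → R) →ₗ[R] M :=
    { toFun := fun v => ∑ i, v i • x i
      map_add' := fun v w => by
        simp [add_smul, Finset.sum_add_distrib]
      map_smul' := fun c v => by
        simp [mul_smul, Finset.smul_sum] }
  have hsurj : Function.Surjective p := by
    intro m
    have : m ∈ Submodule.span R (Set.range x) := hx ▸ Submodule.mem_top
    obtain ⟨c, hc⟩ := (Submodule.mem_span_range_iff_exists_fun R).1 this
    exact ⟨c, hc⟩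
  obtain ⟨s, hs⟩ := Module.projective_lifting_property p LinearMap.id hsurj
  exact ⟨n, x, s, fun m => by
    have := LinearMap.congr_fun hs m
    exact this⟩

theorem injective_of_fg_proj {M : Type u} [AddCommGroup M] [Module R M]
    [Module.Finite R M] [Module.Projective R M] (hR : Module.Injective R R) :
    Module.Injective R M := by
  obtain ⟨n, x, s, hsx⟩ := exists_gen_split (R := R) (M := M)
  let p : (Fin n → R) →ₗ[R] M :=
    { toFun := fun v => ∑ i, v i • x i
      map_add' := fun v w => by
        simp [add_smul, Finset.sum_add_distrib]
      map_smul' := fun c v => by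
        simp [mul_smul, Finset.smul_sum] }
  exact injective_of_retract s p hsx (injective_pi n hR)

end Gen

section HomMod

variable {A : Type u} [Ring A] {B : Type u} [Ring B]
variable {M : Type u} [AddCommGroup M] [Module A M] [Module Bᵐᵒᵖ M]
variable [SMulCommClass A Bᵐᵒᵖ M]
variable {I : Type u} [AddCommGroup I] [Module A I]

/-- Right multiplication by `b` on `M`, as an `A`-linear endomorphism. -/
def opSmulLin (b : B) : M →ₗ[A] M where
  toFun m := op b • m
  map_add' := smul_add (op b)
  map_smul' a m := (smul_comm a (op b) m).symm

@[simp] lemma opSmulLin_apply (b : B) (m : M) : opSmulLin (A := A) (M := M) b m = op b • m := rfl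

/-- The left `B`-module structure on `Hom_A(M, I)` coming from the right `B`-action on `M`. -/
def homModB : Module B (M →ₗ[A] I) where
  smul b f := f ∘ₗ opSmulLin b
  one_smul f := by
    show f ∘ₗ opSmulLin 1 = f
    ext m; simp [opSmulLin]
  mul_smul b b' f := by
    show f ∘ₗ opSmulLin (b * b') = (f ∘ₗ opSmulLin b') ∘ₗ opSmulLin b
    ext m
    simp [opSmulLin, op_mul, mul_smul]
  smul_zero b := by
    show (0 : M →ₗ[A] I) ∘ₗ opSmulLin b = 0
    ext m; simp
  smul_add b f g := by
    show (f + g) ∘ₗ opSmulLin b = f ∘ₗ opSmulLin b + g ∘ₗ opSmulLin b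
    ext m; simp
  add_smul b b' f := by
    show f ∘ₗ opSmulLin (b + b') = f ∘ₗ opSmulLin b + f ∘ₗ opSmulLin b'
    ext m
    simp [opSmulLin, op_add, add_smul]
  zero_smul f := by
    show f ∘ₗ opSmulLin 0 = 0
    ext m; simp [opSmulLin]

theorem homModB_injective [Module.Finite Bᵐᵒᵖ M] [Module.Projective Bᵐᵒᵖ M]
    (hI : Module.Injective A I) :
    @Module.Injective B _ (M →ₗ[A] I) _ (homModB (A := A) (B := B) (M := M) (I := I)) := by
  letI := homModB (A := A) (B := B) (M := M) (I := I)
  apply Module.Baer.injective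
  intro J g
  -- dual basis for `M` over `Bᵐᵒᵖ`
  obtain ⟨n, x, s, hsx⟩ := exists_gen_split (R := Bᵐᵒᵖ) (M := M)
  -- the two maps from `J →₀ M`
  let σ : (↥J →₀ M) →ₗ[A] M := Finsupp.lsum ℕ fun j => opSmulLin (j : B)
  let τ : (↥J →₀ M) →ₗ[A] I := Finsupp.lsum ℕ fun j => (g j : M →ₗ[A] I)
  have hker : LinearMap.ker σ ≤ LinearMap.ker τ := by
    intro c hc
    have hc' : (c.sum fun j m => op (j : B) • m) = 0 := hc
    have h1 : ∑ j ∈ c.support, op (j : B) • s (c j) = (0 : Fin n → Bᵐᵒᵖ) := by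
      have h := congrArg s hc'
      rw [map_zero] at h
      rw [Finsupp.sum, map_sum] at h
      simpa [map_smul] using h
    have key : ∀ i : Fin n,
        (c.sum fun j m => (unop (s m i)) • j) = (0 : ↥J) := by
      intro i
      have h2 : ∑ j ∈ c.support, op (j : B) * s (c j) i = 0 := by
        have := congrFun h1 i
        simpa [Finset.sum_apply] using this
      have h3 : ∑ j ∈ c.support, unop (s (c j) i) * (j : B) = 0 := by
        have := congrArg unop h2
        simpa using this
      apply Subtype.ext
      rw [Finsupp.sum]
      push_cast
      simpa [smul_eq_mul] using h3
    -- now compute τ c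
    show τ c = 0
    have expand : ∀ j : ↥J, ∀ m : M, g j m = ∑ i, g ((unop (s m i)) • j) (x i) := by
      intro j m
      conv_lhs => rw [← hsx m]
      rw [map_sum]
      apply Finset.sum_congr rfl
      intro i _
      have e1 : (s m i) • x i = op (unop (s m i)) • x i := by rw [op_unop]
      rw [e1]
      have hg : g ((unop (s m i)) • j) = (unop (s m i)) • g j := map_smul g _ _
      rw [hg]
      rfl
    have e2 : τ c = c.sum fun j m => g j m := by
      simp [τ, Finsupp.lsum_apply, Finsupp.sum]
    rw [e2]
    have e3 : (c.sum fun j m => g j m) = c.sum fun j m => ∑ i, g ((unop (s m i)) • j) (x i) :=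
      Finset.sum_congr rfl fun j _ => expand j (c j)
    rw [e3, Finsupp.sum, Finset.sum_comm]
    apply Finset.sum_eq_zero
    intro i _
    have e4 : ∑ j ∈ c.support, g ((unop (s (c j) i)) • j) (x i)
        = g (∑ j ∈ c.support, (unop (s (c j) i)) • j) (x i) := by
      rw [map_sum]
      simp
    rw [e4]
    have := key i
    rw [Finsupp.sum] at this
    rw [this]
    simp
  -- factor τ through the range of σ
  let α : ↥(LinearMap.range σ) →ₗ[A] I :=
    ((LinearMap.ker σ).liftQ τ hker) ∘ₗ (LinearMap.quotKerEquivRange σ).symm.toLinearMap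
  have hα : ∀ c : (↥J →₀ M), α ⟨σ c, LinearMap.mem_range_self σ c⟩ = τ c := by
    intro c
    have h1 : (LinearMap.quotKerEquivRange σ) (Submodule.Quotient.mk c)
        = ⟨σ c, LinearMap.mem_range_self σ c⟩ := Subtype.ext (LinearMap.quotKerEquivRange_apply_mk σ c)
    have h2 : (LinearMap.quotKerEquivRange σ).symm ⟨σ c, LinearMap.mem_range_self σ c⟩
        = Submodule.Quotient.mk c := by rw [← h1, LinearEquiv.symm_apply_apply]
    show ((LinearMap.ker σ).liftQ τ hker)
        ((LinearMap.quotKerEquivRange σ).symm ⟨σ c, LinearMap.mem_range_self σ c⟩) = τ c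
    rw [h2, Submodule.liftQ_apply]
  obtain ⟨Φ, hΦ⟩ := hI.out (LinearMap.range σ).subtype (Submodule.injective_subtype _) α
  refine ⟨LinearMap.toSpanSingleton B (M →ₗ[A] I) Φ, ?_⟩
  intro b hb
  apply LinearMap.ext
  intro m
  have h0 : LinearMap.toSpanSingleton B (M →ₗ[A] I) Φ b = b • Φ := rfl
  rw [h0]
  have h1 : (b • Φ) m = Φ (op b • m) := rfl
  rw [h1]
  have hmem : op b • m = σ (Finsupp.single ⟨b, hb⟩ m) := by
    simp [σ, Finsupp.lsum_single]
  have : Φ (op b • m) = Φ ((LinearMap.range σ).subtype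
      ⟨σ (Finsupp.single ⟨b, hb⟩ m), LinearMap.mem_range_self σ _⟩) := by
    rw [hmem]; rfl
  rw [this, hΦ, hα]
  simp [τ, Finsupp.lsum_single]

end HomMod

attribute [local instance] NC.leftModule NC.rightModule

section SingEq

variable (k : Type u) [Field k]
variable (A : Type u) [Ring A] [Algebra k A] (B : Type u) [Ring B] [Algebra k B]
variable (M : Type u) [AddCommGroup M] [Module k M] [Module A M] [Module Bᵐᵒᵖ M]
variable [SMulCommClass A Bᵐᵒᵖ M] [IsScalarTower k A M] [IsScalarTower k Bᵐᵒᵖ M]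
variable (N : Type u) [AddCommGroup N] [Module k N] [Module B N] [Module Aᵐᵒᵖ N]
variable [SMulCommClass B Aᵐᵒᵖ N] [IsScalarTower k B N] [IsScalarTower k Aᵐᵒᵖ N]

instance : SMulCommClass Bᵐᵒᵖ A M := SMulCommClass.symm _ _ _
instance : SMulCommClass Aᵐᵒᵖ B N := SMulCommClass.symm _ _ _

/-- The `A ⊗ Aᵒᵖ`-module structure on `A`. -/
def envRegA : Module (A ⊗[k] Aᵐᵒᵖ) A := TensorProduct.Algebra.module

/-- The `B ⊗ Bᵒᵖ`-module structure on `B`. -/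
def envRegB : Module (B ⊗[k] Bᵐᵒᵖ) B := TensorProduct.Algebra.module

/-- The `A ⊗ Aᵒᵖ`-module structure on `M ⊗_B N`. -/
def envTensorMN : Module (A ⊗[k] Aᵐᵒᵖ) (NC.Tensor k B M N) :=
  @TensorProduct.Algebra.module k A Aᵐᵒᵖ _ _ _ (NC.instModuleTensor k B M N) _ _ _ _ _ _ _ _ _

/-- The `B ⊗ Bᵒᵖ`-module structure on `N ⊗_A M`. -/
def envTensorNM : Module (B ⊗[k] Bᵐᵒᵖ) (NC.Tensor k A N M) :=
  @TensorProduct.Algebra.module k B Bᵐᵒᵖ _ _ _ (NC.instModuleTensor k A N M) _ _ _ _ _ _ _ _ _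


/-- `(M, N)` defines a singular equivalence of Morita type in the sense of Chen and Sun:
`M` and `N` are bimodules, finitely generated projective on either side, with
`M ⊗_B N ≅ A ⊕ P` as `(A,A)`-bimodules where `P` has finite projective dimension as a
bimodule, and `N ⊗_A M ≅ B ⊕ Q` as `(B,B)`-bimodules where `Q` has finite projective
dimension as a bimodule. -/
def ChenSun : Prop :=
  Module.Finite A M ∧ Module.Projective A M ∧ Module.Finite Bᵐᵒᵖ M ∧ Module.Projective Bᵐᵒᵖ M ∧
  Module.Finite B N ∧ Module.Projective B N ∧ Module.Finite Aᵐᵒᵖ N ∧ Module.Projective Aᵐᵒᵖ N ∧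
  (letI := envTensorMN k A B M N
   letI := envRegA k A
   ∃ (P : ModuleCat.{u} (A ⊗[k] Aᵐᵒᵖ)) (d : ℕ), pdLE (A ⊗[k] Aᵐᵒᵖ) d P ∧
     Nonempty ((NC.Tensor k B M N) ≃ₗ[A ⊗[k] Aᵐᵒᵖ] (A × P))) ∧
  (letI := envTensorNM k A B M N
   letI := envRegB k B
   ∃ (Q : ModuleCat.{u} (B ⊗[k] Bᵐᵒᵖ)) (d : ℕ), pdLE (B ⊗[k] Bᵐᵒᵖ) d Q ∧
     Nonempty ((NC.Tensor k A N M) ≃ₗ[B ⊗[k] Bᵐᵒᵖ] (B × Q)))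


section Aux

variable {k A B M N}

/-- `id_N ⊗ f` on `N ⊗_A M`, for an `A`-linear endomorphism `f` of `M`. -/
def tmap (f : M →ₗ[A] M) : NC.Tensor k A N M →ₗ[k] NC.Tensor k A N M :=
  Submodule.mapQ _ _ (LinearMap.lTensor N (LinearMap.restrictScalars k f)) (by
    rw [NC.rel, Submodule.span_le]
    rintro z ⟨a, n, m, rfl⟩
    simp only [SetLike.mem_coe, Submodule.mem_comap, map_sub, LinearMap.lTensor_tmul]
    refine Submodule.subset_span ⟨a, n, f m, ?_⟩
    simp only [LinearMap.coe_restrictScalars, map_smul])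

lemma tmap_mk (f : M →ₗ[A] M) (n : N) (m : M) :
    tmap f (NC.mk k A n m) = NC.mk k A n (f m) := rfl

lemma tmap_add (f g : M →ₗ[A] M) (t : NC.Tensor k A N M) :
    tmap (f + g) t = tmap f t + tmap g t := by
  induction t using NC.induction_on with
  | zero => rw [map_zero, map_zero, map_zero, add_zero]
  | basic n m =>
      rw [tmap_mk, tmap_mk, tmap_mk]
      show NC.mk k A n (f m + g m) = _
      rw [NC.mk_add_right]
  | add x y hx hy => rw [map_add, map_add, map_add, hx, hy]; abel

lemma tmap_leftB (b : B) (f : M →ₗ[A] M) (t : NC.Tensor k A N M) :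
    tmap f (b • t) = b • tmap f t := by
  induction t using NC.induction_on with
  | zero => rw [smul_zero, map_zero, smul_zero]
  | basic n m =>
      show tmap f (NC.mk k A (b • n) m) = b • NC.mk k A n (f m)
      rw [tmap_mk]
      rfl
  | add x y hx hy => rw [smul_add, map_add, map_add, hx, hy, smul_add]

lemma tmap_opSmul (b : B) (f : M →ₗ[A] M) (t : NC.Tensor k A N M) :
    tmap (f ∘ₗ opSmulLin b) t = tmap f (op b • t) := by
  induction t using NC.induction_on with
  | zero => rw [map_zero, smul_zero, map_zero]
  | basic n m =>
      show NC.mk k A n (f (op b • m)) = tmap f (NC.mk k A n (op b • m))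
      rw [tmap_mk]
  | add x y hx hy => rw [map_add, smul_add, map_add, hx, hy]

lemma tmap_rho (b : B) (t : NC.Tensor k A N M) :
    tmap (opSmulLin (A := A) b) t = op b • t := by
  induction t using NC.induction_on with
  | zero => rw [map_zero, smul_zero]
  | basic n m =>
      show NC.mk k A n (op b • m) = op b • NC.mk k A n m
      rfl
  | add x y hx hy => rw [map_add, hx, hy, smul_add]

end Aux

/-- Let `(M, N)` define a singular equivalence of Morita type in the
sense of Chen-Sun between finite-dimensional `k`-algebras `A` and `B`. If `A` is
self-injective, then `B` is self-injective. -/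
theorem stmt18 [FiniteDimensional k A] [FiniteDimensional k B]
    (h : ChenSun k A B M N) (hAinj : Module.Injective A A) :
    Module.Injective B B := by
  obtain ⟨finAM, projAM, finBM, projBM, -, -, -, -, -, hB⟩ := h
  haveI := finAM; haveI := projAM; haveI := finBM; haveI := projBM
  letI := envTensorNM k A B M N
  letI := envRegB k B
  obtain ⟨Q, d, -, ⟨e⟩⟩ := hB
  -- `M` is an injective `A`-module
  have hMinj : Module.Injective A M := injective_of_fg_proj hAinj
  -- hence `Hom_A(M, M)` is an injective `B`-module
  letI EMod := homModB (A := A) (B := B) (M := M) (I := M)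
  have hEinj : @Module.Injective B _ (M →ₗ[A] M) _ EMod := homModB_injective hMinj
  -- the split `B → N ⊗_A M → B`
  let ι : B → NC.Tensor k A N M := fun b => e.symm (b, (0 : Q))
  let π : NC.Tensor k A N M → B := fun t => (e t).1
  have hπadd : ∀ t t', π (t + t') = π t + π t' := by
    intro t t'; show (e (t + t')).1 = _; rw [map_add]; rfl
  have hπleft : ∀ (b : B) (t : NC.Tensor k A N M), π (b • t) = b * π t := by
    intro b t
    have h1 : b • t = (b ⊗ₜ[k] (1 : Bᵐᵒᵖ)) • t := by
      have h0 : (b ⊗ₜ[k] (1 : Bᵐᵒᵖ)) • t = b • ((1 : Bᵐᵒᵖ) • t) := rfl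
      rw [h0, one_smul]
    rw [h1]
    show (e ((b ⊗ₜ[k] (1 : Bᵐᵒᵖ)) • t)).1 = b * (e t).1
    rw [map_smul]
    have h2 : ((b ⊗ₜ[k] (1 : Bᵐᵒᵖ)) • e t).1 = (b ⊗ₜ[k] (1 : Bᵐᵒᵖ)) • (e t).1 := rfl
    rw [h2]
    have h3 : (b ⊗ₜ[k] (1 : Bᵐᵒᵖ)) • (e t).1 = b • ((1 : Bᵐᵒᵖ) • (e t).1) := rfl
    rw [h3, one_smul, smul_eq_mul]
  have hιleft : ∀ b : B, ι b = b • ι 1 := by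
    intro b
    have h2 : (b ⊗ₜ[k] (1 : Bᵐᵒᵖ)) • ((1 : B), (0 : Q)) = ((b : B), (0 : Q)) := by
      have h0 : (b ⊗ₜ[k] (1 : Bᵐᵒᵖ)) • ((1 : B), (0 : Q))
          = (b • ((1 : Bᵐᵒᵖ) • (1 : B)), (b ⊗ₜ[k] (1 : Bᵐᵒᵖ)) • (0 : Q)) := rfl
      rw [h0, one_smul, smul_eq_mul, mul_one, smul_zero]
    have h1 : b • ι 1 = (b ⊗ₜ[k] (1 : Bᵐᵒᵖ)) • ι 1 := by
      have h0 : (b ⊗ₜ[k] (1 : Bᵐᵒᵖ)) • ι 1 = b • ((1 : Bᵐᵒᵖ) • ι 1) := rfl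
      rw [h0, one_smul]
    rw [h1]
    show e.symm (b, (0 : Q)) = (b ⊗ₜ[k] (1 : Bᵐᵒᵖ)) • e.symm (1, (0 : Q))
    rw [← map_smul, h2]
  have hιop : ∀ b : B, ι b = op b • ι 1 := by
    intro b
    have h2 : ((1 : B) ⊗ₜ[k] (op b)) • ((1 : B), (0 : Q)) = ((b : B), (0 : Q)) := by
      have h0 : ((1 : B) ⊗ₜ[k] (op b)) • ((1 : B), (0 : Q))
          = ((1 : B) • ((op b) • (1 : B)), ((1 : B) ⊗ₜ[k] (op b)) • (0 : Q)) := rfl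
      rw [h0, one_smul, smul_zero]
      have h5 : (op b) • (1 : B) = 1 * b := rfl
      rw [h5, one_mul]
    have h1 : op b • ι 1 = ((1 : B) ⊗ₜ[k] (op b)) • ι 1 := by
      have h0 : ((1 : B) ⊗ₜ[k] (op b)) • ι 1 = (1 : B) • ((op b) • ι 1) := rfl
      rw [h0, one_smul]
    rw [h1]
    show e.symm (b, (0 : Q)) = ((1 : B) ⊗ₜ[k] (op b)) • e.symm (1, (0 : Q))
    rw [← map_smul, h2]
  have hπι : ∀ b : B, π (ι b) = b := by
    intro b
    show (e (e.symm (b, (0 : Q)))).1 = b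
    rw [LinearEquiv.apply_symm_apply]
  -- the retraction datum
  let u : B →ₗ[B] (M →ₗ[A] M) :=
    { toFun := fun b => opSmulLin b
      map_add' := fun b b' => by
        apply LinearMap.ext
        intro m
        show op (b + b') • m = op b • m + op b' • m
        rw [op_add, add_smul]
      map_smul' := fun b' b => by
        apply LinearMap.ext
        intro m
        show op (b' * b) • m = op b • (op b' • m)
        rw [op_mul, mul_smul]
      }
  let r : (M →ₗ[A] M) →ₗ[B] B :=
    { toFun := fun f => π (tmap (N := N) f (ι 1))
      map_add' := fun f g => by
        show π (tmap (f + g) (ι 1)) = _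
        rw [tmap_add, hπadd]
      map_smul' := fun b f => by
        show π (tmap (f ∘ₗ opSmulLin b) (ι 1)) = b • π (tmap f (ι 1))
        rw [tmap_opSmul, ← hιop, hιleft, tmap_leftB, hπleft, smul_eq_mul]
        }
  have hur : ∀ b : B, r (u b) = b := by
    intro b
    show π (tmap (N := N) (opSmulLin b) (ι 1)) = b
    rw [tmap_rho, ← hιop, hπι]
  exact injective_of_retract u r hur hEinj

end SingEq
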